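/- The Alexander biquandle X = ℤ[s^{±1}, t^{±1}]/(s − t) has infinite type, while its associated quandle Q(X) has type 1. -/

import Mathlib

set_option maxHeartbeats 1000000
set_option synthInstance.maxHeartbeats 1000000


/-- The Laurent polynomial ring `ℤ[s^{±1}, t^{±1}]` in two variables. -/
noncomputable abbrev LaurentTwo : Type := AddMonoidAlgebra ℤ (ℤ × ℤ)

/-- The variable `s`. -/
noncomputable def sVar : LaurentTwo := AddMonoidAlgebra.of' ℤ (ℤ × ℤ) (1, 0)

/-- The variable `t`. -/
noncomputable def tVar : LaurentTwo := AddMonoidAlgebra.of' ℤ (ℤ × ℤ) (0, 1)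

/-- Collapse `s, t` to a single variable. -/
noncomputable def collapse : LaurentTwo →+* AddMonoidAlgebra ℤ ℤ :=
  AddMonoidAlgebra.mapDomainRingHom ℤ
    ((AddMonoidHom.fst ℤ ℤ) + (AddMonoidHom.snd ℤ ℤ))

lemma collapse_single (a b : ℤ) (c : ℤ) :
    collapse (AddMonoidAlgebra.single (a, b) c) = AddMonoidAlgebra.single (a + b) c := by
  simp [collapse, AddMonoidAlgebra.mapDomainRingHom_apply, Finsupp.mapDomain_single]

lemma sVar_sub_tVar_dvd {x : LaurentTwo}
    (hx : x ∈ Ideal.span {sVar - tVar}) : collapse x = 0 := by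
  rw [Ideal.mem_span_singleton] at hx
  obtain ⟨c, rfl⟩ := hx
  have : collapse (sVar - tVar) = 0 := by
    rw [map_sub]
    show collapse (AddMonoidAlgebra.single (1, 0) 1)
      - collapse (AddMonoidAlgebra.single (0, 1) 1) = 0
    rw [collapse_single, collapse_single]
    norm_num
  rw [map_mul, this, zero_mul]

lemma sVar_isUnit : IsUnit sVar := by
  refine IsUnit.of_mul_eq_one (AddMonoidAlgebra.single (-1, 0) 1) ?_
  show AddMonoidAlgebra.single ((1 : ℤ), (0 : ℤ)) (1 : ℤ) * AddMonoidAlgebra.single (-1, 0) 1 = 1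
  rw [AddMonoidAlgebra.single_mul_single]
  norm_num
  rfl

lemma mk_s_eq_mk_t :
    (Ideal.Quotient.mk (Ideal.span {sVar - tVar})) sVar
      = (Ideal.Quotient.mk (Ideal.span {sVar - tVar})) tVar := by
  rw [← sub_eq_zero, ← map_sub, Ideal.Quotient.eq_zero_iff_mem]
  exact Ideal.subset_span rfl

/-- The Alexander biquandle `X = ℤ[s^{±1},t^{±1}]/(s − t)` has infinite type
(no `n > 0` with `tⁿa + (sⁿ−tⁿ)b = a` and `sⁿa = a` for all `a, b ∈ X`),
while its associated quandle `Q(X)`, with `x * y = s⁻¹t·x + (1 − s⁻¹t)·y`,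
has type `1`. -/
theorem stmt_5 :
    (¬ ∃ n : ℕ, 0 < n ∧ ∀ a b : LaurentTwo ⧸ Ideal.span {sVar - tVar},
        (Ideal.Quotient.mk _ tVar) ^ n * a +
          ((Ideal.Quotient.mk _ sVar) ^ n - (Ideal.Quotient.mk _ tVar) ^ n) * b = a ∧
        (Ideal.Quotient.mk _ sVar) ^ n * a = a) ∧
    IsLeast {n : ℕ | 0 < n ∧ ∀ x y : LaurentTwo ⧸ Ideal.span {sVar - tVar},
        (Ring.inverse (Ideal.Quotient.mk _ sVar) * Ideal.Quotient.mk _ tVar) ^ n * x +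
          (1 - (Ring.inverse (Ideal.Quotient.mk _ sVar) * Ideal.Quotient.mk _ tVar) ^ n) * y
          = x} 1 := by
  constructor
  · rintro ⟨n, hn, h⟩
    obtain ⟨h1, -⟩ := h 1 0
    rw [mul_one, mul_zero, add_zero] at h1
    -- h1 : mk (tVar) ^ n = 1
    have h2 : (Ideal.Quotient.mk (Ideal.span {sVar - tVar})) (tVar ^ n - 1) = 0 := by
      rw [map_sub, map_pow, map_one, h1, sub_self]
    rw [Ideal.Quotient.eq_zero_iff_mem] at h2
    have h3 : collapse (tVar ^ n - 1) = 0 := sVar_sub_tVar_dvd h2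
    rw [map_sub, map_pow, map_one, sub_eq_zero] at h3
    have h4 : collapse tVar = AddMonoidAlgebra.single (1 : ℤ) (1 : ℤ) := by
      show collapse (AddMonoidAlgebra.single ((0 : ℤ), (1 : ℤ)) 1) = _
      rw [collapse_single]; norm_num
    rw [h4, AddMonoidAlgebra.single_pow, one_pow,
      show (n • (1 : ℤ)) = (n : ℤ) by simp] at h3
    have h5 : (AddMonoidAlgebra.single ((n : ℤ)) (1 : ℤ)).coeff ((n : ℤ)) =
        (1 : AddMonoidAlgebra ℤ ℤ).coeff ((n : ℤ)) := by rw [h3]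
    rw [AddMonoidAlgebra.coeff_single, Finsupp.single_apply, if_pos rfl, AddMonoidAlgebra.one_def,
      AddMonoidAlgebra.coeff_single, Finsupp.single_apply, if_neg (by exact_mod_cast hn.ne)] at h5
    exact one_ne_zero h5
  · have key : Ring.inverse ((Ideal.Quotient.mk (Ideal.span {sVar - tVar})) sVar) *
        (Ideal.Quotient.mk (Ideal.span {sVar - tVar})) tVar = 1 := by
      rw [← mk_s_eq_mk_t]
      exact Ring.inverse_mul_cancel _ (sVar_isUnit.map _)
    constructor
    · exact ⟨one_pos, fun x y => by rw [pow_one, key, one_mul, sub_self, zero_mul, add_zero]⟩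
    · intro n hn; exact hn.1
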